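/- Each coordinate function x_i of the n-dimensional Peano curve is self-affine with scale parameter H = 1/n to base r = 3^n: for all integers k ≥ 1, 0 ≤ s ≤ r^k − 1, and all real h with 0 ≤ h < r^{−k}, one has x_i(s r^{−k} + h) − x_i(s r^{−k}) = ε(k,s) r^{−k/n} x_i(r^k h) for some sign ε(k,s) ∈ {−1, 1}. -/

import Mathlib

open scoped BigOperators ENNReal

/-- `Φ` : evaluation of a ternary digit sequence (digits at indices `1,2,3,…`). -/
noncomputable def Phi (t : ℕ → ℕ) : ℝ := ∑' k : ℕ, (t (k + 1) : ℝ) / 3 ^ (k + 1)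

/-- A sequence of ternary digits (elements of `D = {0,1,2}`). -/
def IsDigitSeq (t : ℕ → ℕ) : Prop := ∀ k, t k ≤ 2

/-- `S_{i+jn}(𝐭) = ∑_{k=1}^{i+jn} t_k − ∑_{s=0}^{j} t_{i+sn}`. -/
def S (n i j : ℕ) (t : ℕ → ℕ) : ℤ :=
  (∑ k ∈ Finset.Icc 1 (i + j * n), (t k : ℤ)) -
    ∑ s ∈ Finset.range (j + 1), (t (i + s * n) : ℤ)

/-- The operator `ξ(a) = 2 − a`, as a permutation of `ℝ` (so that integer powers
`ξ^m`, `m : ℤ`, make sense). -/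
def xiPerm : Equiv.Perm ℝ :=
  ⟨fun a => 2 - a, fun a => 2 - a, fun a => by dsimp; ring, fun a => by dsimp; ring⟩

/-- `x_i(𝐭) = ∑_{j=0}^∞ ξ^{S_{i+jn}(𝐭)}(t_{i+jn}) / 3^{j+1}`. -/
noncomputable def xcoord (n i : ℕ) (t : ℕ → ℕ) : ℝ :=
  ∑' j : ℕ, ((xiPerm ^ (S n i j t)) ((t (i + j * n) : ℝ))) / 3 ^ (j + 1)

/-- The canonical ternary digit expansion of `t ∈ [0,1]` (all digits `2` for `t = 1`). -/
noncomputable def ternaryDigit (t : ℝ) (k : ℕ) : ℕ :=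
  if t = 1 then 2 else (⌊t * 3 ^ k⌋).toNat % 3

/-- The `i`-th coordinate function of the `n`-dimensional Peano curve, as a function
on `[0,1]` (via the canonical ternary representation; by well-definedness this agrees
with `xcoord` on any ternary representation). -/
noncomputable def peanoCoord (n i : ℕ) (t : ℝ) : ℝ := xcoord n i (ternaryDigit t)

/- ### Auxiliary lemmas -/

lemma xiPerm_apply (a : ℝ) : xiPerm a = 2 - a := rfl

lemma xiPerm_inv : xiPerm⁻¹ = xiPerm := rfl

lemma xiPerm_zpow (m : ℤ) : xiPerm ^ m = if Even m then 1 else xiPerm := by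
  induction m using Int.induction_on with
  | zero => simp
  | succ q ih =>
      rw [zpow_add_one, ih]
      by_cases hq : Even ((q : ℤ))
      · rw [if_pos hq, if_neg (by simpa [Int.even_add_one] using hq), one_mul]
      · rw [if_neg hq, if_pos (by simpa [Int.even_add_one] using hq)]
        ext a; simp [Equiv.Perm.mul_apply, xiPerm_apply]
  | pred q ih =>
      rw [zpow_sub_one, ih, xiPerm_inv]
      by_cases hq : Even (-(q : ℤ))
      · rw [if_pos hq, if_neg (by simpa [Int.even_sub_one] using hq), one_mul]
      · rw [if_neg hq, if_pos (by simpa [Int.even_sub_one] using hq)]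
        ext a; simp [Equiv.Perm.mul_apply, xiPerm_apply]

lemma xiPerm_zpow_apply (m : ℤ) (a : ℝ) :
    (xiPerm ^ m) a = if Even m then a else 2 - a := by
  rw [xiPerm_zpow]
  by_cases hm : Even m <;> simp [hm, xiPerm_apply]

lemma abs_xiPerm_zpow_le (m : ℤ) {a : ℝ} (h0 : 0 ≤ a) (h2 : a ≤ 2) :
    |(xiPerm ^ m) a| ≤ 2 := by
  rw [xiPerm_zpow_apply]
  split <;> rw [abs_le] <;> constructor <;> linarith

lemma summable_term (n i : ℕ) (t : ℕ → ℕ) (ht : IsDigitSeq t) :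
    Summable (fun j : ℕ => ((xiPerm ^ (S n i j t)) ((t (i + j * n) : ℝ))) / 3 ^ (j + 1)) := by
  apply Summable.of_norm_bounded (g := fun j : ℕ => 2 * (1 / 3 : ℝ) ^ j)
  · exact (summable_geometric_of_lt_one (by norm_num) (by norm_num)).mul_left 2
  · intro j
    have hd0 : (0 : ℝ) ≤ (t (i + j * n) : ℝ) := by positivity
    have hd2 : ((t (i + j * n) : ℝ)) ≤ 2 := by exact_mod_cast ht _
    have h1 : |(xiPerm ^ (S n i j t)) ((t (i + j * n) : ℝ))| ≤ 2 :=
      abs_xiPerm_zpow_le _ hd0 hd2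
    have h3 : (0 : ℝ) < 3 ^ (j + 1) := by positivity
    rw [Real.norm_eq_abs, abs_div, abs_of_pos h3]
    calc |(xiPerm ^ (S n i j t)) ((t (i + j * n) : ℝ))| / 3 ^ (j + 1)
        ≤ 2 / 3 ^ (j + 1) := by gcongr
      _ ≤ 2 / 3 ^ j := by
          have h4 : (3 : ℝ) ^ j ≤ 3 ^ (j + 1) :=
            pow_le_pow_right₀ (by norm_num) (Nat.le_succ j)
          have h5 : (0 : ℝ) < 3 ^ j := by positivity
          exact div_le_div_of_nonneg_left (by norm_num) h5 h4
      _ = 2 * (1 / 3 : ℝ) ^ j := by rw [div_eq_mul_inv, one_div, inv_pow]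

lemma isDigitSeq_ternary (t : ℝ) : IsDigitSeq (ternaryDigit t) := by
  intro k
  unfold ternaryDigit
  split
  · exact le_refl 2
  · omega

lemma ternaryDigit_eq_nfloor {x : ℝ} (hx1 : x ≠ 1) (k : ℕ) :
    ternaryDigit x k = ⌊x * 3 ^ k⌋₊ % 3 := by
  unfold ternaryDigit
  rw [if_neg hx1, Int.floor_toNat]

lemma ternary_zero (j : ℕ) : ternaryDigit 0 j = 0 := by
  unfold ternaryDigit
  rw [if_neg (by norm_num)]
  simp

lemma floor_prefix (N m s : ℕ) (hm : m ≤ N) {u : ℝ} (hu0 : 0 ≤ u) (hu1 : u < 1) :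
    ⌊(((s : ℝ) + u) / 3 ^ N) * 3 ^ m⌋₊ = s / 3 ^ (N - m) := by
  have h3 : ((3 : ℝ) ^ N) = 3 ^ (N - m) * 3 ^ m := by
    rw [← pow_add]; congr 1; omega
  have hx : (((s : ℝ) + u) / 3 ^ N) * 3 ^ m = ((s : ℝ) + u) / ((3 ^ (N - m) : ℕ) : ℝ) := by
    push_cast
    rw [h3]
    have hm0 : ((3 : ℝ) ^ m) ≠ 0 := by positivity
    have hnm0 : ((3 : ℝ) ^ (N - m)) ≠ 0 := by positivity
    field_simp
  rw [hx, Nat.floor_div_natCast]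
  congr 1
  rw [add_comm, Nat.floor_add_natCast hu0, Nat.floor_eq_zero.2 hu1, zero_add]

lemma floor_suffix (N m s : ℕ) (hm : N < m) {u : ℝ} (hu0 : 0 ≤ u) :
    ⌊(((s : ℝ) + u) / 3 ^ N) * 3 ^ m⌋₊ = s * 3 ^ (m - N) + ⌊u * 3 ^ (m - N)⌋₊ := by
  have hx : (((s : ℝ) + u) / 3 ^ N) * 3 ^ m
      = u * 3 ^ (m - N) + ((s * 3 ^ (m - N) : ℕ) : ℝ) := by
    push_cast
    have h3 : ((3 : ℝ) ^ m) = 3 ^ N * 3 ^ (m - N) := by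
      rw [← pow_add]; congr 1; omega
    have hN0 : ((3 : ℝ) ^ N) ≠ 0 := by positivity
    rw [h3]
    field_simp
    ring
  rw [hx, Nat.floor_add_natCast (by positivity), add_comm]

lemma prefix_lt_one {N s : ℕ} (hsN : s < 3 ^ N) {u : ℝ} (hu1 : u < 1) :
    ((s : ℝ) + u) / 3 ^ N < 1 := by
  rw [div_lt_one (by positivity)]
  have h2 : (s : ℝ) + 1 ≤ 3 ^ N := by exact_mod_cast hsN
  linarith

lemma ternary_prefix (N m s : ℕ) (hm : m ≤ N) (hsN : s < 3 ^ N) {u : ℝ}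
    (hu0 : 0 ≤ u) (hu1 : u < 1) :
    ternaryDigit (((s : ℝ) + u) / 3 ^ N) m = s / 3 ^ (N - m) % 3 := by
  rw [ternaryDigit_eq_nfloor (ne_of_lt (prefix_lt_one hsN hu1)),
    floor_prefix N m s hm hu0 hu1]

lemma ternary_suffix (N m s : ℕ) (hm : N < m) (hsN : s < 3 ^ N) {u : ℝ}
    (hu0 : 0 ≤ u) (hu1 : u < 1) :
    ternaryDigit (((s : ℝ) + u) / 3 ^ N) m = ternaryDigit u (m - N) := by
  rw [ternaryDigit_eq_nfloor (ne_of_lt (prefix_lt_one hsN hu1)),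
    floor_suffix N m s hm hu0, ternaryDigit_eq_nfloor (ne_of_lt hu1)]
  obtain ⟨c, hc⟩ : 3 ∣ s * 3 ^ (m - N) :=
    Dvd.dvd.mul_left (dvd_pow_self 3 (by omega : m - N ≠ 0)) s
  omega

lemma S_zero_tail (n i j : ℕ) : S n i j (fun _ => 0) = 0 := by
  simp [S]

lemma S_prefix (n i k j : ℕ) (hin : i ≤ n) (hj : j < k) {D d0 : ℕ → ℕ}
    (hle : ∀ m, m ≤ n * k → D m = d0 m) : S n i j D = S n i j d0 := by
  have hb : i + j * n ≤ n * k := by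
    have h1 : (j + 1) * n ≤ k * n := Nat.mul_le_mul_right n (by omega)
    have h2 : (j + 1) * n = j * n + n := by ring
    have h3 : k * n = n * k := by ring
    omega
  unfold S
  congr 1
  · refine Finset.sum_congr rfl fun m hm => ?_
    have := (Finset.mem_Icc.1 hm).2
    rw [hle m (by omega)]
  · refine Finset.sum_congr rfl fun m hm => ?_
    have hm' := Finset.mem_range.1 hm
    have h1 : i + m * n ≤ i + j * n := by
      have := Nat.mul_le_mul_right n (by omega : m ≤ j); omega
    rw [hle _ (by omega)]

lemma sum_Icc_one (b : ℕ) (f : ℕ → ℤ) :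
    ∑ m ∈ Finset.Icc 1 b, f m = ∑ x ∈ Finset.range b, f (1 + x) := by
  rw [← Finset.Ico_add_one_right_eq_Icc, Finset.sum_Ico_eq_sum_range]
  simp

lemma S_split (n i k j : ℕ) (hi1 : 1 ≤ i) (hin : i ≤ n) {D d0 e : ℕ → ℕ}
    (hle : ∀ m, m ≤ n * k → D m = d0 m)
    (hgt : ∀ m, n * k < m → D m = e (m - n * k)) :
    S n i (k + j) D =
      ((∑ m ∈ Finset.Icc 1 (n * k), (d0 m : ℤ)) -
          ∑ t ∈ Finset.range k, (d0 (i + t * n) : ℤ))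
        + S n i j e := by
  have hidx : i + (k + j) * n = n * k + (i + j * n) := by ring
  have e1 : ∑ m ∈ Finset.Icc 1 (i + (k + j) * n), (D m : ℤ)
      = (∑ m ∈ Finset.Icc 1 (n * k), (d0 m : ℤ))
        + ∑ m ∈ Finset.Icc 1 (i + j * n), (e m : ℤ) := by
    rw [sum_Icc_one, sum_Icc_one, sum_Icc_one, hidx, Finset.sum_range_add]
    congr 1
    · refine Finset.sum_congr rfl fun x hx => ?_
      have := Finset.mem_range.1 hx
      rw [hle _ (by omega)]
    · refine Finset.sum_congr rfl fun x hx => ?_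
      rw [hgt _ (by omega)]
      congr 2
      omega
  have e2 : ∑ t ∈ Finset.range (k + j + 1), (D (i + t * n) : ℤ)
      = (∑ t ∈ Finset.range k, (d0 (i + t * n) : ℤ))
        + ∑ t ∈ Finset.range (j + 1), (e (i + t * n) : ℤ) := by
    have hkj : k + j + 1 = k + (j + 1) := by omega
    rw [hkj, Finset.sum_range_add]
    congr 1
    · refine Finset.sum_congr rfl fun t ht => ?_
      have ht' := Finset.mem_range.1 ht
      have h1 : (t + 1) * n ≤ k * n := Nat.mul_le_mul_right n (by omega)
      have h2 : (t + 1) * n = t * n + n := by ring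
      have h3 : k * n = n * k := by ring
      rw [hle _ (by omega)]
    · refine Finset.sum_congr rfl fun t ht => ?_
      have h1 : (k + t) * n = n * k + t * n := by ring
      rw [hgt _ (by omega)]
      congr 2
      omega
  unfold S
  rw [e1, e2]
  ring

lemma xcoord_sub (n i k : ℕ) (hi1 : 1 ≤ i) (hin : i ≤ n) {D d0 e : ℕ → ℕ}
    (hD : IsDigitSeq D) (hd0 : IsDigitSeq d0) (he : IsDigitSeq e)
    (hle : ∀ m, m ≤ n * k → D m = d0 m)
    (hgt : ∀ m, n * k < m → D m = e (m - n * k))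
    (h0 : ∀ m, n * k < m → d0 m = 0) :
    ∃ ε : ℝ, (ε = 1 ∨ ε = -1) ∧
      xcoord n i D - xcoord n i d0 = ε * ((3 : ℝ) ^ k)⁻¹ * xcoord n i e := by
  classical
  set C : ℤ := (∑ m ∈ Finset.Icc 1 (n * k), (d0 m : ℤ)) -
      ∑ t ∈ Finset.range k, (d0 (i + t * n) : ℤ) with hC
  set ε : ℝ := if Even C then 1 else -1 with hε
  refine ⟨ε, by by_cases hc : Even C <;> simp [hε, hc], ?_⟩
  set f : ℕ → ℝ := fun j => ((xiPerm ^ (S n i j D)) ((D (i + j * n) : ℝ))) / 3 ^ (j + 1) with hf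
  set f0 : ℕ → ℝ := fun j => ((xiPerm ^ (S n i j d0)) ((d0 (i + j * n) : ℝ))) / 3 ^ (j + 1)
    with hf0
  set g : ℕ → ℝ := fun j => ((xiPerm ^ (S n i j e)) ((e (i + j * n) : ℝ))) / 3 ^ (j + 1) with hg
  have sD : Summable f := summable_term n i D hD
  have sd0 : Summable f0 := summable_term n i d0 hd0
  have sg : Summable g := summable_term n i e he
  -- S at shifted indices
  have hSD : ∀ j, S n i (j + k) D = C + S n i j e := by
    intro j
    rw [add_comm j k]
    exact S_split n i k j hi1 hin hle hgt
  have hSd0 : ∀ j, S n i (j + k) d0 = C := by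
    intro j
    rw [add_comm j k]
    have := S_split n i k j hi1 hin (D := d0) (d0 := d0) (e := fun _ => 0)
      (fun m _ => rfl) (fun m hm => by rw [h0 m hm])
    rw [this, S_zero_tail, add_zero]
  have hidx2 : ∀ j : ℕ, n * k < i + (j + k) * n := by
    intro j
    have h1 : (j + k) * n = j * n + k * n := by ring
    have h2 : n * k = k * n := by ring
    omega
  have hDidx : ∀ j, D (i + (j + k) * n) = e (i + j * n) := by
    intro j
    rw [hgt _ (hidx2 j)]
    congr 1
    have h1 : (j + k) * n = j * n + k * n := by ring
    have h2 : n * k = k * n := by ring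
    omega
  have hd0idx : ∀ j, d0 (i + (j + k) * n) = 0 := fun j => h0 _ (hidx2 j)
  -- key pointwise identity for the tails
  have key : ∀ j, f (j + k) - f0 (j + k) = ε * ((3 : ℝ) ^ k)⁻¹ * g j := by
    intro j
    have h3 : (3 : ℝ) ^ (j + k + 1) = 3 ^ k * 3 ^ (j + 1) := by
      rw [← pow_add]; congr 1; omega
    have h3k : ((3 : ℝ) ^ k) ≠ 0 := by positivity
    have h3j : ((3 : ℝ) ^ (j + 1)) ≠ 0 := by positivity
    simp only [hf, hf0, hg]
    rw [hSD j, hSd0 j, hDidx j, hd0idx j, xiPerm_zpow_apply, xiPerm_zpow_apply,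
      xiPerm_zpow_apply]
    by_cases hc : Even C <;> by_cases hS : Even (S n i j e)
    · rw [if_pos (Int.even_add.2 (iff_of_true hc hS)), if_pos hc, if_pos hS, hε,
        if_pos hc, h3]
      push_cast
      field_simp
      ring
    · rw [if_neg (fun hh => hS ((Int.even_add.1 hh).1 hc)), if_pos hc, if_neg hS, hε,
        if_pos hc, h3]
      push_cast
      field_simp
      try ring
    · rw [if_neg (fun hh => hc ((Int.even_add.1 hh).2 hS)), if_neg hc, if_pos hS, hε,
        if_neg hc, h3]
      push_cast
      field_simp
      try ring
    · rw [if_pos (Int.even_add.2 (iff_of_false hc hS)), if_neg hc, if_neg hS, hε,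
        if_neg hc, h3]
      push_cast
      field_simp
      try ring
  -- assemble
  have hpre : ∀ j ∈ Finset.range k, f j = f0 j := by
    intro j hj
    have hj' := Finset.mem_range.1 hj
    have hb : i + j * n ≤ n * k := by
      have h1 : (j + 1) * n ≤ k * n := Nat.mul_le_mul_right n (by omega)
      have h2 : (j + 1) * n = j * n + n := by ring
      have h3 : k * n = n * k := by ring
      omega
    simp only [hf, hf0]
    rw [S_prefix n i k j hin hj' hle, hle _ hb]
  have sDk : Summable (fun j => f (j + k)) := (summable_nat_add_iff k).2 sD
  have sd0k : Summable (fun j => f0 (j + k)) := (summable_nat_add_iff k).2 sd0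
  calc xcoord n i D - xcoord n i d0
      = (∑ j ∈ Finset.range k, f j + ∑' j, f (j + k))
        - (∑ j ∈ Finset.range k, f0 j + ∑' j, f0 (j + k)) := by
        rw [Summable.sum_add_tsum_nat_add k sD, Summable.sum_add_tsum_nat_add k sd0]
        rfl
    _ = ∑' j, f (j + k) - ∑' j, f0 (j + k) := by
        rw [Finset.sum_congr rfl hpre]; ring
    _ = ∑' j, (f (j + k) - f0 (j + k)) := (Summable.tsum_sub sDk sd0k).symm
    _ = ∑' j, ε * ((3 : ℝ) ^ k)⁻¹ * g j := tsum_congr key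
    _ = ε * ((3 : ℝ) ^ k)⁻¹ * ∑' j, g j := tsum_mul_left
    _ = ε * ((3 : ℝ) ^ k)⁻¹ * xcoord n i e := rfl

/-- each `x_i` is self-affine with scale parameter `H = 1/n` to base
`r = 3^n`. -/
theorem peanoCoord_self_affine (n i : ℕ) (hn : 2 ≤ n) (hi1 : 1 ≤ i) (hin : i ≤ n) :
    ∀ k : ℕ, 1 ≤ k → ∀ s : ℕ, s ≤ (3 ^ n) ^ k - 1 →
      ∀ h : ℝ, 0 ≤ h → h < (((3 : ℝ) ^ n) ^ k)⁻¹ →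
        ∃ ε : ℝ, (ε = 1 ∨ ε = -1) ∧
          peanoCoord n i ((s : ℝ) * (((3 : ℝ) ^ n) ^ k)⁻¹ + h) -
              peanoCoord n i ((s : ℝ) * (((3 : ℝ) ^ n) ^ k)⁻¹) =
            ε * ((3 : ℝ) ^ n) ^ (-((k : ℝ) / (n : ℝ))) *
              peanoCoord n i (((3 : ℝ) ^ n) ^ k * h) := by
  intro k hk s hs h hh0 hh1
  have hpow : ((3 : ℝ) ^ n) ^ k = 3 ^ (n * k) := (pow_mul (3 : ℝ) n k).symm
  have hRpos : (0 : ℝ) < ((3 : ℝ) ^ n) ^ k := by positivity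
  have hsN : s < 3 ^ (n * k) := by
    have h1 : (3 : ℕ) ^ n ^ k ≥ 1 := Nat.one_le_pow _ _ (by norm_num)
    have h2 : (3 ^ n) ^ k = 3 ^ (n * k) := (pow_mul 3 n k).symm
    have h3 : 1 ≤ (3 ^ n : ℕ) ^ k := Nat.one_le_pow _ _ (by positivity)
    omega
  set u : ℝ := ((3 : ℝ) ^ n) ^ k * h with hu
  have hu0 : 0 ≤ u := mul_nonneg (le_of_lt hRpos) hh0
  have hu1 : u < 1 := by
    have := mul_lt_mul_of_pos_left hh1 hRpos
    rwa [mul_inv_cancel₀ (ne_of_gt hRpos)] at this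
  have ht : (s : ℝ) * (((3 : ℝ) ^ n) ^ k)⁻¹ + h = ((s : ℝ) + u) / 3 ^ (n * k) := by
    rw [← hpow, hu]
    field_simp
  have ht0 : (s : ℝ) * (((3 : ℝ) ^ n) ^ k)⁻¹ = ((s : ℝ) + 0) / 3 ^ (n * k) := by
    rw [← hpow, add_zero, div_eq_mul_inv]
  have hle : ∀ m, m ≤ n * k →
      ternaryDigit (((s : ℝ) + u) / 3 ^ (n * k)) m
        = ternaryDigit (((s : ℝ) + 0) / 3 ^ (n * k)) m := by
    intro m hm
    rw [ternary_prefix (n * k) m s hm hsN hu0 hu1,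
      ternary_prefix (n * k) m s hm hsN le_rfl zero_lt_one]
  have hgt : ∀ m, n * k < m →
      ternaryDigit (((s : ℝ) + u) / 3 ^ (n * k)) m = ternaryDigit u (m - n * k) :=
    fun m hm => ternary_suffix (n * k) m s hm hsN hu0 hu1
  have h0 : ∀ m, n * k < m →
      ternaryDigit (((s : ℝ) + 0) / 3 ^ (n * k)) m = 0 := by
    intro m hm
    rw [ternary_suffix (n * k) m s hm hsN le_rfl zero_lt_one, ternary_zero]
  obtain ⟨ε, hε, heq⟩ := xcoord_sub n i k hi1 hin
    (isDigitSeq_ternary _) (isDigitSeq_ternary _) (isDigitSeq_ternary u) hle hgt h0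
  refine ⟨ε, hε, ?_⟩
  have hrpow : ((3 : ℝ) ^ n) ^ (-((k : ℝ) / (n : ℝ))) = ((3 : ℝ) ^ k)⁻¹ := by
    have hn0 : (n : ℝ) ≠ 0 := Nat.cast_ne_zero.2 (by omega)
    rw [← Real.rpow_natCast (3 : ℝ) n, ← Real.rpow_mul (by norm_num)]
    have hexp : (n : ℝ) * (-((k : ℝ) / (n : ℝ))) = -(k : ℝ) := by
      field_simp
    rw [hexp, Real.rpow_neg (by norm_num), Real.rpow_natCast]
  rw [hrpow]
  unfold peanoCoord
  rw [ht, ht0]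
  exact heq
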